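/- Let N, d ≥ 1, let {R_k}_{k≥1} be N×N row-stochastic matrices, and let {v_k}_{k≥1} be vectors in ℝ^N with strictly positive entries, ∑_{i=1}^N (v_k)_i = N, and v_kᵀ = v_{k+1}ᵀ R_k for all k. Write Φ_R(k,s) = R_k R_{k−1}⋯R_s for k ≥ s and suppose there exist C₁ > 0 and ρ ∈ (0,1) with ‖Φ_R(k,s) − (1/N) 1_N v_sᵀ‖ ≤ C₁ ρ^{k−s} for all k ≥ s ≥ 1 (Frobenius norm). Let {s^k}_{k≥1} ⊆ ℝ^{N×d} satisfy s^{k+1} = R_k s^k + δ^k where ‖δ^k‖ ≤ C̃ for all k, and suppose ‖(1/N) v_kᵀ s^k‖ ≤ D for all k. Then there exists a constant M > 0 such that ‖s^k‖ ≤ M for all k ≥ 1. -/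

import Mathlib

attribute [local instance] Matrix.frobeniusSeminormedAddCommGroup

/-- Frobenius norm of a real matrix. -/
noncomputable def frobNorm {ι κ : Type*} [Fintype ι] [Fintype κ]
    (M : ι → κ → ℝ) : ℝ :=
  Real.sqrt (∑ i, ∑ j, (M i j) ^ 2)

/-- Euclidean norm of a real vector. -/
noncomputable def vecNorm {κ : Type*} [Fintype κ] (x : κ → ℝ) : ℝ :=
  Real.sqrt (∑ j, (x j) ^ 2)

/-- `PhiR R s t` is the backward matrix product Φ_R(s+t, s) = R(s+t)⋯R(s). -/
def PhiR {N : ℕ} (R : ℕ → Matrix (Fin N) (Fin N) ℝ) (s : ℕ) :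
    ℕ → Matrix (Fin N) (Fin N) ℝ
  | 0 => R s
  | t + 1 => R (s + t + 1) * PhiR R s t

lemma frobNorm_eq_norm {ι κ : Type*} [Fintype ι] [Fintype κ] (M : Matrix ι κ ℝ) :
    frobNorm M = ‖M‖ := by
  rw [Matrix.frobenius_norm_def]
  unfold frobNorm
  rw [Real.sqrt_eq_rpow]
  congr 1
  refine Finset.sum_congr rfl fun i _ => Finset.sum_congr rfl fun j _ => ?_
  rw [Real.rpow_two, Real.norm_eq_abs, sq_abs]

lemma frobNorm_nonneg {ι κ : Type*} [Fintype ι] [Fintype κ] (M : ι → κ → ℝ) :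
    0 ≤ frobNorm M := Real.sqrt_nonneg _

lemma vecNorm_nonneg {κ : Type*} [Fintype κ] (x : κ → ℝ) :
    0 ≤ vecNorm x := Real.sqrt_nonneg _

lemma entry_le_frobNorm {ι κ : Type*} [Fintype ι] [Fintype κ] (M : ι → κ → ℝ) (i : ι) (j : κ) :
    |M i j| ≤ frobNorm M := by
  rw [frobNorm, ← Real.sqrt_sq_eq_abs]
  apply Real.sqrt_le_sqrt
  calc M i j ^ 2 ≤ ∑ j', M i j' ^ 2 :=
        Finset.single_le_sum (f := fun j' => M i j' ^ 2)
          (fun _ _ => sq_nonneg _) (Finset.mem_univ j)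
    _ ≤ ∑ i', ∑ j', M i' j' ^ 2 :=
        Finset.single_le_sum (f := fun i' => ∑ j', M i' j' ^ 2)
          (fun _ _ => Finset.sum_nonneg fun _ _ => sq_nonneg _) (Finset.mem_univ i)

lemma frobNorm_const_rows {ι κ : Type*} [Fintype ι] [Fintype κ] (g : κ → ℝ) :
    frobNorm (fun (_ : ι) c => g c) = Real.sqrt (Fintype.card ι) * vecNorm g := by
  rw [frobNorm, vecNorm, ← Real.sqrt_mul (by positivity)]
  congr 1
  rw [Finset.sum_const, Finset.card_univ, nsmul_eq_mul]

lemma vecNorm_le_of_bound {κ : Type*} [Fintype κ] (g : κ → ℝ) (a : ℝ) (ha : 0 ≤ a)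
    (h : ∀ c, |g c| ≤ a) : vecNorm g ≤ Real.sqrt (Fintype.card κ) * a := by
  rw [vecNorm, ← Real.sqrt_sq ha, ← Real.sqrt_mul (by positivity)]
  apply Real.sqrt_le_sqrt
  calc ∑ j, g j ^ 2 ≤ ∑ _j : κ, a ^ 2 := by
        refine Finset.sum_le_sum fun j _ => ?_
        rw [← sq_abs]
        exact pow_le_pow_left₀ (abs_nonneg _) (h j) 2
    _ = (Fintype.card κ) * a ^ 2 := by
        rw [Finset.sum_const, Finset.card_univ, nsmul_eq_mul]

lemma frobNorm_mul_le {ι κ μ : Type*} [Fintype ι] [Fintype κ] [Fintype μ]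
    (A : Matrix ι κ ℝ) (B : Matrix κ μ ℝ) :
    frobNorm (A * B) ≤ frobNorm A * frobNorm B := by
  rw [frobNorm_eq_norm, frobNorm_eq_norm, frobNorm_eq_norm]
  exact Matrix.frobenius_norm_mul A B

/-- Let {R_k}_{k≥1} be N×N row-stochastic matrices, {v_k}_{k≥1}
strictly positive vectors with ∑_i (v_k)_i = N and v_kᵀ = v_{k+1}ᵀ R_k; suppose
‖Φ_R(k,s) − (1/N) 1_N v_sᵀ‖ ≤ C₁ ρ^{k−s} (Frobenius norm). Let s^{k+1} = R_k s^k + δ^k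
with ‖δ^k‖ ≤ C̃, and ‖(1/N) v_kᵀ s^k‖ ≤ D. Then there is M > 0 with ‖s^k‖ ≤ M for all
k ≥ 1. -/
theorem stmt9 (N d : ℕ) (hN : 1 ≤ N) (hd : 1 ≤ d)
    (R : ℕ → Matrix (Fin N) (Fin N) ℝ)
    (hRnn : ∀ k, 1 ≤ k → ∀ i j, 0 ≤ R k i j)
    (hRrow : ∀ k, 1 ≤ k → ∀ i, ∑ j, R k i j = 1)
    (v : ℕ → Fin N → ℝ)
    (hvpos : ∀ k, 1 ≤ k → ∀ i, 0 < v k i)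
    (hvsum : ∀ k, 1 ≤ k → ∑ i, v k i = (N : ℝ))
    (hvrec : ∀ k, 1 ≤ k → ∀ j, v k j = ∑ i, v (k + 1) i * R k i j)
    (C₁ ρ : ℝ) (hC₁ : 0 < C₁) (hρ : ρ ∈ Set.Ioo (0 : ℝ) 1)
    (hgeo : ∀ s k, 1 ≤ s → s ≤ k →
      frobNorm (fun i j => PhiR R s (k - s) i j - (1 / (N : ℝ)) * v s j)
        ≤ C₁ * ρ ^ (k - s))
    (w : ℕ → Matrix (Fin N) (Fin d) ℝ) (δ : ℕ → Matrix (Fin N) (Fin d) ℝ)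
    (hrec : ∀ k, 1 ≤ k → w (k + 1) = R k * w k + δ k)
    (Ctil : ℝ) (hδ : ∀ k, 1 ≤ k → frobNorm (δ k) ≤ Ctil)
    (D : ℝ)
    (havg : ∀ k, 1 ≤ k →
      vecNorm (fun c => (1 / (N : ℝ)) * ∑ i, v k i * w k i c) ≤ D) :
    ∃ M : ℝ, 0 < M ∧ ∀ k, 1 ≤ k → frobNorm (w k) ≤ M := by
  obtain ⟨hρ0, hρ1⟩ := hρ
  have hN0 : (0 : ℝ) < N := by exact_mod_cast Nat.lt_of_lt_of_le Nat.zero_lt_one hN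
  set avg : ℕ → Fin d → ℝ := fun k c => (1 / (N : ℝ)) * ∑ i, v k i * w k i c with havgdef
  set A : ℕ → Matrix (Fin N) (Fin d) ℝ := fun k => Matrix.of fun _ c => avg k c with hAdef
  set y : ℕ → Matrix (Fin N) (Fin d) ℝ := fun k => w k - A k with hydef
  set b : ℕ → Fin d → ℝ := fun k c => (1 / (N : ℝ)) * ∑ i, v (k + 1) i * δ k i c with hbdef
  set B : ℕ → Matrix (Fin N) (Fin d) ℝ := fun k => Matrix.of fun _ c => b k c with hBdef
  set E : ℕ → Matrix (Fin N) (Fin d) ℝ := fun k => δ k - B k with hEdef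
  -- step for the averages
  have claim1 : ∀ k, 1 ≤ k → ∀ c, avg (k + 1) c = avg k c + b k c := by
    intro k hk c
    have key : ∑ i, v (k + 1) i * ∑ j, R k i j * w k j c = ∑ j, v k j * w k j c := by
      calc ∑ i, v (k + 1) i * ∑ j, R k i j * w k j c
          = ∑ i, ∑ j, v (k + 1) i * R k i j * w k j c := by
            refine Finset.sum_congr rfl fun i _ => ?_
            rw [Finset.mul_sum]
            exact Finset.sum_congr rfl fun j _ => by ring
        _ = ∑ j, ∑ i, v (k + 1) i * R k i j * w k j c := Finset.sum_comm
        _ = ∑ j, (∑ i, v (k + 1) i * R k i j) * w k j c := by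
            refine Finset.sum_congr rfl fun j _ => ?_
            rw [Finset.sum_mul]
        _ = ∑ j, v k j * w k j c := by
            refine Finset.sum_congr rfl fun j _ => ?_
            rw [← hvrec k hk j]
    show (1 / (N : ℝ)) * ∑ i, v (k + 1) i * w (k + 1) i c
        = (1 / (N : ℝ)) * ∑ i, v k i * w k i c + (1 / (N : ℝ)) * ∑ i, v (k + 1) i * δ k i c
    rw [hrec k hk]
    simp only [Matrix.add_apply, Matrix.mul_apply, mul_add, Finset.sum_add_distrib]
    rw [key]
  have claimAstep : ∀ k, 1 ≤ k → A (k + 1) = A k + B k := by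
    intro k hk
    ext i c
    simp only [hAdef, hBdef, Matrix.of_apply, Matrix.add_apply]
    exact claim1 k hk c
  have claimRA : ∀ k, 1 ≤ k → R k * A k = A k := by
    intro k hk
    ext i c
    simp only [hAdef, Matrix.mul_apply, Matrix.of_apply]
    rw [← Finset.sum_mul, hRrow k hk i, one_mul]
  have yrec : ∀ k, 1 ≤ k → y (k + 1) = R k * y k + E k := by
    intro k hk
    have h1 : R k * y k = R k * w k - A k := by
      show R k * (w k - A k) = _
      rw [Matrix.mul_sub, claimRA k hk]
    calc y (k + 1) = (R k * w k + δ k) - (A k + B k) := by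
          show w (k + 1) - A (k + 1) = _
          rw [hrec k hk, claimAstep k hk]
      _ = (R k * w k - A k) + (δ k - B k) := by abel
      _ = R k * y k + E k := by rw [h1]
  -- orthogonality
  have orthy : ∀ k, 1 ≤ k → ∀ c, ∑ i, v k i * y k i c = 0 := by
    intro k hk c
    have : ∀ i, v k i * y k i c = v k i * w k i c - v k i * avg k c := by
      intro i
      show v k i * (w k i c - avg k c) = _
      ring
    rw [Finset.sum_congr rfl fun i _ => this i, Finset.sum_sub_distrib, ← Finset.sum_mul,
      hvsum k hk]
    show (∑ i, v k i * w k i c) - (N : ℝ) * ((1 / (N : ℝ)) * ∑ i, v k i * w k i c) = 0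
    field_simp
    ring
  have orthE : ∀ k, 1 ≤ k → ∀ c, ∑ i, v (k + 1) i * E k i c = 0 := by
    intro k hk c
    have : ∀ i, v (k + 1) i * E k i c = v (k + 1) i * δ k i c - v (k + 1) i * b k c := by
      intro i
      show v (k + 1) i * (δ k i c - b k c) = _
      ring
    rw [Finset.sum_congr rfl fun i _ => this i, Finset.sum_sub_distrib, ← Finset.sum_mul,
      hvsum (k + 1) (by omega)]
    show (∑ i, v (k + 1) i * δ k i c) - (N : ℝ) * ((1 / (N : ℝ)) * ∑ i, v (k + 1) i * δ k i c) = 0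
    field_simp
    ring
  -- contraction
  have hcontr : ∀ a m (X : Matrix (Fin N) (Fin d) ℝ), 1 ≤ a →
      (∀ c, ∑ i, v a i * X i c = 0) →
      frobNorm (PhiR R a m * X) ≤ C₁ * ρ ^ m * frobNorm X := by
    intro a m X ha hX
    set Q : Matrix (Fin N) (Fin N) ℝ := Matrix.of fun _ j => (1 / (N : ℝ)) * v a j with hQ
    have hQX : Q * X = 0 := by
      ext i c
      simp only [Matrix.mul_apply, Matrix.zero_apply, hQ, Matrix.of_apply]
      have : ∀ j, 1 / (N : ℝ) * v a j * X j c = 1 / (N : ℝ) * (v a j * X j c) := fun j => by ring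
      rw [Finset.sum_congr rfl fun j _ => this j, ← Finset.mul_sum, hX c, mul_zero]
    have heq : PhiR R a m * X = (PhiR R a m - Q) * X := by
      rw [Matrix.sub_mul, hQX, sub_zero]
    rw [heq]
    have hg := hgeo a (a + m) ha (Nat.le_add_right a m)
    simp only [Nat.add_sub_cancel_left] at hg
    have hfe : (fun i j => PhiR R a m i j - 1 / (N : ℝ) * v a j) = (PhiR R a m - Q) := by
      funext i j
      simp [Matrix.sub_apply, hQ]
    rw [hfe] at hg
    calc frobNorm ((PhiR R a m - Q) * X)
        ≤ frobNorm (PhiR R a m - Q) * frobNorm X := frobNorm_mul_le _ _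
      _ ≤ C₁ * ρ ^ m * frobNorm X :=
          mul_le_mul_of_nonneg_right hg (frobNorm_nonneg X)
  -- unrolling
  have hunroll : ∀ t, y (1 + t + 1) = PhiR R 1 t * y 1 +
      (∑ j ∈ Finset.range t, PhiR R (1 + j + 1) (t - 1 - j) * E (1 + j)) + E (1 + t) := by
    intro t
    induction t with
    | zero =>
      simp only [Finset.range_zero, Finset.sum_empty, add_zero]
      exact yrec 1 le_rfl
    | succ t ih =>
      have h1 : y (1 + (t + 1) + 1) = R (1 + t + 1) * y (1 + t + 1) + E (1 + t + 1) :=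
        yrec (1 + t + 1) (by omega)
      rw [h1, ih, Matrix.mul_add, Matrix.mul_add]
      have hPhi : R (1 + t + 1) * (PhiR R 1 t * y 1) = PhiR R 1 (t + 1) * y 1 := by
        rw [← Matrix.mul_assoc]; rfl
      have hsum : R (1 + t + 1) * (∑ j ∈ Finset.range t, PhiR R (1 + j + 1) (t - 1 - j) * E (1 + j))
          = ∑ j ∈ Finset.range t, PhiR R (1 + j + 1) (t - j) * E (1 + j) := by
        rw [Matrix.mul_sum]
        refine Finset.sum_congr rfl fun j hj => ?_
        have hj' : j < t := Finset.mem_range.mp hj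
        have hP : PhiR R (1 + j + 1) (t - j) = R (1 + t + 1) * PhiR R (1 + j + 1) (t - 1 - j) := by
          have ht : t - j = (t - 1 - j) + 1 := by omega
          rw [ht]
          show R ((1 + j + 1) + (t - 1 - j) + 1) * _ = _
          have : (1 + j + 1) + (t - 1 - j) + 1 = 1 + t + 1 := by omega
          rw [this]
        rw [hP, Matrix.mul_assoc]
      rw [hPhi, hsum]
      rw [Finset.sum_range_succ]
      have hlast : PhiR R (1 + t + 1) ((t + 1) - 1 - t) * E (1 + t) = R (1 + t + 1) * E (1 + t) := by
        have : (t + 1) - 1 - t = 0 := by omega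
        rw [this]; rfl
      have hidx : ∀ j ∈ Finset.range t,
          PhiR R (1 + j + 1) ((t + 1) - 1 - j) * E (1 + j)
            = PhiR R (1 + j + 1) (t - j) * E (1 + j) := by
        intro j hj
        have : (t + 1) - 1 - j = t - j := by omega
        rw [this]
      rw [Finset.sum_congr rfl hidx, hlast]
      abel
  -- bound on E
  have hCtil0 : 0 ≤ Ctil := le_trans (frobNorm_nonneg (δ 1)) (hδ 1 le_rfl)
  set Ebar : ℝ := Ctil * (1 + Real.sqrt N * Real.sqrt d) with hEbar
  have hEbar0 : 0 ≤ Ebar := by positivity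
  have hE : ∀ k, 1 ≤ k → frobNorm (E k) ≤ Ebar := by
    intro k hk
    have hb : ∀ c, |b k c| ≤ Ctil := by
      intro c
      have h2 : |∑ i, v (k + 1) i * δ k i c| ≤ (N : ℝ) * Ctil := by
        calc |∑ i, v (k + 1) i * δ k i c| ≤ ∑ i, |v (k + 1) i * δ k i c| :=
              Finset.abs_sum_le_sum_abs _ _
          _ ≤ ∑ i, v (k + 1) i * Ctil := by
              refine Finset.sum_le_sum fun i _ => ?_
              rw [abs_mul, abs_of_pos (hvpos (k + 1) (by omega) i)]
              exact mul_le_mul_of_nonneg_left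
                ((entry_le_frobNorm (δ k) i c).trans (hδ k hk))
                (le_of_lt (hvpos (k + 1) (by omega) i))
          _ = (N : ℝ) * Ctil := by rw [← Finset.sum_mul, hvsum (k + 1) (by omega)]
      show |(1 / (N : ℝ)) * ∑ i, v (k + 1) i * δ k i c| ≤ Ctil
      rw [abs_mul, abs_of_pos (by positivity : (0:ℝ) < 1 / (N : ℝ))]
      calc (1 / (N : ℝ)) * |∑ i, v (k + 1) i * δ k i c|
          ≤ (1 / (N : ℝ)) * ((N : ℝ) * Ctil) :=
            mul_le_mul_of_nonneg_left h2 (by positivity)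
        _ = Ctil := by field_simp
    have hBk : frobNorm (B k) ≤ Real.sqrt N * (Real.sqrt d * Ctil) := by
      have h1 : frobNorm (B k) = Real.sqrt (Fintype.card (Fin N)) * vecNorm (b k) :=
        frobNorm_const_rows (b k)
      rw [h1, Fintype.card_fin]
      have h2 : vecNorm (b k) ≤ Real.sqrt (Fintype.card (Fin d)) * Ctil :=
        vecNorm_le_of_bound (b k) Ctil hCtil0 hb
      rw [Fintype.card_fin] at h2
      exact mul_le_mul_of_nonneg_left h2 (Real.sqrt_nonneg _)
    calc frobNorm (E k) ≤ frobNorm (δ k) + frobNorm (B k) := by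
          rw [hEdef]
          show frobNorm (δ k - B k) ≤ _
          rw [frobNorm_eq_norm, frobNorm_eq_norm, frobNorm_eq_norm]
          exact norm_sub_le _ _
      _ ≤ Ctil + Real.sqrt N * (Real.sqrt d * Ctil) := by
          exact add_le_add (hδ k hk) hBk
      _ = Ebar := by rw [hEbar]; ring
  -- geometric sum bound
  have h1ρ : (0 : ℝ) < 1 - ρ := by linarith
  have hgeomsum : ∀ t : ℕ, ∑ j ∈ Finset.range t, ρ ^ (t - 1 - j) ≤ 1 / (1 - ρ) := by
    intro t
    rw [Finset.sum_range_reflect (fun j => ρ ^ j) t]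
    rw [geom_sum_eq (ne_of_lt hρ1) t]
    rw [show (ρ ^ t - 1) / (ρ - 1) = (1 - ρ ^ t) / (1 - ρ) by
      rw [← neg_div_neg_eq]; ring_nf]
    rw [div_le_div_iff₀ h1ρ h1ρ]
    have hpt : 0 ≤ ρ ^ t := pow_nonneg hρ0.le t
    nlinarith
  set K : ℝ := C₁ * frobNorm (y 1) + C₁ * Ebar * (1 / (1 - ρ)) + Ebar with hK
  have hyK : ∀ t : ℕ, frobNorm (y (1 + t + 1)) ≤ K := by
    intro t
    rw [hunroll t]
    have tri : frobNorm (PhiR R 1 t * y 1 +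
          (∑ j ∈ Finset.range t, PhiR R (1 + j + 1) (t - 1 - j) * E (1 + j)) + E (1 + t))
        ≤ frobNorm (PhiR R 1 t * y 1) +
          (∑ j ∈ Finset.range t, frobNorm (PhiR R (1 + j + 1) (t - 1 - j) * E (1 + j))) +
          frobNorm (E (1 + t)) := by
      have h1 : ‖PhiR R 1 t * y 1 +
            (∑ j ∈ Finset.range t, PhiR R (1 + j + 1) (t - 1 - j) * E (1 + j)) + E (1 + t)‖
          ≤ ‖PhiR R 1 t * y 1 +
            (∑ j ∈ Finset.range t, PhiR R (1 + j + 1) (t - 1 - j) * E (1 + j))‖ + ‖E (1 + t)‖ :=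
        norm_add_le _ _
      have h2 : ‖PhiR R 1 t * y 1 +
            (∑ j ∈ Finset.range t, PhiR R (1 + j + 1) (t - 1 - j) * E (1 + j))‖
          ≤ ‖PhiR R 1 t * y 1‖ +
            ‖∑ j ∈ Finset.range t, PhiR R (1 + j + 1) (t - 1 - j) * E (1 + j)‖ :=
        norm_add_le _ _
      have h3 : ‖∑ j ∈ Finset.range t, PhiR R (1 + j + 1) (t - 1 - j) * E (1 + j)‖
          ≤ ∑ j ∈ Finset.range t, ‖PhiR R (1 + j + 1) (t - 1 - j) * E (1 + j)‖ :=
        norm_sum_le _ _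
      simp only [frobNorm_eq_norm]
      linarith
    refine tri.trans ?_
    have hA1 : frobNorm (PhiR R 1 t * y 1) ≤ C₁ * frobNorm (y 1) := by
      refine (hcontr 1 t (y 1) le_rfl (orthy 1 le_rfl)).trans ?_
      have hpt : ρ ^ t ≤ 1 := pow_le_one₀ hρ0.le hρ1.le
      have h5 := mul_le_mul_of_nonneg_right
        (mul_le_mul_of_nonneg_left hpt hC₁.le) (frobNorm_nonneg (y 1))
      rw [mul_one] at h5
      exact h5
    have hsum2 : (∑ j ∈ Finset.range t, frobNorm (PhiR R (1 + j + 1) (t - 1 - j) * E (1 + j)))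
        ≤ C₁ * Ebar * (1 / (1 - ρ)) := by
      calc ∑ j ∈ Finset.range t, frobNorm (PhiR R (1 + j + 1) (t - 1 - j) * E (1 + j))
          ≤ ∑ j ∈ Finset.range t, C₁ * Ebar * ρ ^ (t - 1 - j) := by
            refine Finset.sum_le_sum fun j hj => ?_
            refine (hcontr (1 + j + 1) (t - 1 - j) (E (1 + j)) (by omega)
              (orthE (1 + j) (by omega))).trans ?_
            have hEj := hE (1 + j) (by omega)
            have h4 : C₁ * ρ ^ (t - 1 - j) * frobNorm (E (1 + j))
                ≤ C₁ * ρ ^ (t - 1 - j) * Ebar :=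
              mul_le_mul_of_nonneg_left hEj (by positivity)
            refine h4.trans (le_of_eq (by ring))
        _ = C₁ * Ebar * ∑ j ∈ Finset.range t, ρ ^ (t - 1 - j) := by rw [← Finset.mul_sum]
        _ ≤ C₁ * Ebar * (1 / (1 - ρ)) :=
            mul_le_mul_of_nonneg_left (hgeomsum t) (by positivity)
    have hEt := hE (1 + t) (by omega)
    rw [hK]
    linarith
  have hA : ∀ k, 1 ≤ k → frobNorm (A k) ≤ Real.sqrt N * D := by
    intro k hk
    have h1 : frobNorm (A k) = Real.sqrt (Fintype.card (Fin N)) * vecNorm (avg k) :=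
      frobNorm_const_rows (avg k)
    rw [h1, Fintype.card_fin]
    exact mul_le_mul_of_nonneg_left (havg k hk) (Real.sqrt_nonneg _)
  refine ⟨max (frobNorm (w 1)) (K + Real.sqrt N * D) + 1, ?_, ?_⟩
  · have h0 : (0 : ℝ) ≤ frobNorm (w 1) := frobNorm_nonneg _
    have h1 := le_max_left (frobNorm (w 1)) (K + Real.sqrt N * D)
    linarith
  · intro k hk
    rcases eq_or_lt_of_le hk with h1 | h2
    · rw [← h1]
      have := le_max_left (frobNorm (w 1)) (K + Real.sqrt N * D)
      linarith
    · obtain ⟨t, rfl⟩ : ∃ t, k = 1 + t + 1 := ⟨k - 2, by omega⟩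
      have hy := hyK t
      have hAk := hA (1 + t + 1) (by omega)
      have hw : frobNorm (w (1 + t + 1)) ≤ frobNorm (y (1 + t + 1)) + frobNorm (A (1 + t + 1)) := by
        have hswap : w (1 + t + 1) = y (1 + t + 1) + A (1 + t + 1) := by
          show w (1 + t + 1) = (w (1 + t + 1) - A (1 + t + 1)) + A (1 + t + 1)
          abel
        rw [hswap]
        simp only [frobNorm_eq_norm]
        exact norm_add_le _ _
      have := le_max_right (frobNorm (w 1)) (K + Real.sqrt N * D)
      linarith
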